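/- Let p₁,…,p_n be positive integers and let σ be a permutation of {1,…,n}. Then κ(p_{σ⁻¹(1)}, …, p_{σ⁻¹(n)}) ≡ κ(p₁,…,p_n) + Σ_{i=1}^n p_i (σ(i) − i) (mod 2). -/
import Mathlib

/-- `κ(p₁,…,pₙ) = Σ_{j} (p_j − 1)(Σ_{k<j} p_k)` for a sequence indexed by `Fin n`. -/
def kappaF {n : ℕ} (p : Fin n → ℕ) : ℤ :=
  ∑ j : Fin n, ((p j : ℤ) - 1) * ∑ k ∈ Finset.Iio j, (p k : ℤ)

open Finset

private lemma iio_eq {n : ℕ} (j : Fin n) : Finset.Iio j = Finset.univ.filter (· < j) := by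
  ext x; simp

private lemma ioi_eq {n : ℕ} (j : Fin n) : Finset.Ioi j = Finset.univ.filter (j < ·) := by
  ext x; simp

private lemma kappa_split {n : ℕ} (p : Fin n → ℕ) :
    kappaF p = (∑ j : Fin n, ∑ k ∈ Finset.Iio j, (p j : ℤ) * (p k : ℤ))
      - ∑ j : Fin n, ∑ k ∈ Finset.Iio j, (p k : ℤ) := by
  rw [← Finset.sum_sub_distrib]
  refine Finset.sum_congr rfl fun j _ => ?_
  rw [← Finset.mul_sum, sub_mul, one_mul]

private lemma two_mul_Q {n : ℕ} (q : Fin n → ℤ) :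
    2 * (∑ j : Fin n, ∑ k ∈ Finset.Iio j, q j * q k)
      = (∑ i : Fin n, q i) ^ 2 - ∑ i : Fin n, (q i) ^ 2 := by
  have h1 : ∀ j : Fin n, ∑ k ∈ Finset.Iio j, q j * q k
      = ∑ k : Fin n, if k < j then q j * q k else 0 := fun j => by
    rw [iio_eq, Finset.sum_filter]
  have hswap : (∑ j : Fin n, ∑ k : Fin n, if k < j then q j * q k else 0)
      = ∑ j : Fin n, ∑ k : Fin n, if j < k then q j * q k else 0 := by
    rw [Finset.sum_comm]
    refine Finset.sum_congr rfl fun j _ => Finset.sum_congr rfl fun k _ => ?_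
    simp [mul_comm]
  calc 2 * (∑ j : Fin n, ∑ k ∈ Finset.Iio j, q j * q k)
      = (∑ j : Fin n, ∑ k : Fin n, if k < j then q j * q k else 0)
        + ∑ j : Fin n, ∑ k : Fin n, if j < k then q j * q k else 0 := by
        simp only [h1]; rw [← hswap]; ring
    _ = ∑ j : Fin n, ∑ k : Fin n, ((q j * q k) - if j = k then q j * q k else 0) := by
        rw [← Finset.sum_add_distrib]
        refine Finset.sum_congr rfl fun j _ => ?_
        rw [← Finset.sum_add_distrib]
        refine Finset.sum_congr rfl fun k _ => ?_
        rcases lt_trichotomy j k with h | h | h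
        · simp [h, h.ne, not_lt.mpr h.le]
        · simp [h]
        · simp [h, h.ne', not_lt.mpr h.le]
    _ = (∑ i : Fin n, q i) ^ 2 - ∑ i : Fin n, (q i) ^ 2 := by
        simp only [Finset.sum_sub_distrib]
        congr 1
        · rw [sq, Finset.sum_mul_sum]
        · refine Finset.sum_congr rfl fun j _ => ?_
          rw [Finset.sum_ite_eq Finset.univ j (fun k => q j * q k)]
          simp [sq]

theorem stmt5 {n : ℕ} (p : Fin n → ℕ) (hp : ∀ i, 0 < p i) (σ : Equiv.Perm (Fin n)) :
    kappaF (fun j => p (σ⁻¹ j)) ≡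
      kappaF p + ∑ i : Fin n, (p i : ℤ) * (((σ i : ℕ) : ℤ) - ((i : ℕ) : ℤ)) [ZMOD 2] := by
  set q : Fin n → ℕ := fun j => p (σ⁻¹ j) with hq
  -- quadratic parts agree
  have hQinv : (∑ j : Fin n, ∑ k ∈ Finset.Iio j, (q j : ℤ) * (q k : ℤ))
      = ∑ j : Fin n, ∑ k ∈ Finset.Iio j, (p j : ℤ) * (p k : ℤ) := by
    have h1 := two_mul_Q (fun i => (q i : ℤ))
    have h2 := two_mul_Q (fun i => (p i : ℤ))
    have hs : (∑ i : Fin n, (q i : ℤ)) = ∑ i : Fin n, (p i : ℤ) :=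
      Equiv.sum_comp σ⁻¹ (fun i => (p i : ℤ))
    have hs2 : (∑ i : Fin n, (q i : ℤ) ^ 2) = ∑ i : Fin n, (p i : ℤ) ^ 2 :=
      Equiv.sum_comp σ⁻¹ (fun i => (p i : ℤ) ^ 2)
    have : 2 * (∑ j : Fin n, ∑ k ∈ Finset.Iio j, (q j : ℤ) * (q k : ℤ))
        = 2 * (∑ j : Fin n, ∑ k ∈ Finset.Iio j, (p j : ℤ) * (p k : ℤ)) := by
      rw [h1, h2, hs, hs2]
    exact mul_left_cancel₀ (by norm_num) this
  -- linear parts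
  have hL : ∀ r : Fin n → ℕ, (∑ j : Fin n, ∑ k ∈ Finset.Iio j, (r k : ℤ))
      = ∑ k : Fin n, ((Finset.Ioi k).card : ℤ) * (r k : ℤ) := by
    intro r
    have : ∀ j : Fin n, ∑ k ∈ Finset.Iio j, (r k : ℤ)
        = ∑ k : Fin n, if k < j then (r k : ℤ) else 0 := fun j => by
      rw [iio_eq, Finset.sum_filter]
    simp only [this]
    rw [Finset.sum_comm]
    refine Finset.sum_congr rfl fun k _ => ?_
    rw [← Finset.sum_filter, ← ioi_eq, Finset.sum_const, nsmul_eq_mul]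
  have hcard : ∀ k : Fin n, ((Finset.Ioi k).card : ℤ) = (n : ℤ) - 1 - (k : ℕ) := by
    intro k
    rw [Fin.card_Ioi]
    have hk : (k : ℕ) + 1 ≤ n := k.2
    omega
  have key : kappaF q = kappaF p + ∑ i : Fin n, (p i : ℤ) * (((σ i : ℕ) : ℤ) - ((i : ℕ) : ℤ)) := by
    rw [kappa_split, kappa_split, hQinv, hL, hL]
    have hLq : (∑ k : Fin n, ((Finset.Ioi k).card : ℤ) * (q k : ℤ))
        = ∑ i : Fin n, ((Finset.Ioi (σ i)).card : ℤ) * (p i : ℤ) := by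
      have h := Fintype.sum_equiv σ
        (fun i => ((Finset.Ioi (σ i)).card : ℤ) * (p i : ℤ))
        (fun k => ((Finset.Ioi k).card : ℤ) * (q k : ℤ)) (fun i => by simp [hq])
      exact h.symm
    rw [hLq]
    simp only [hcard]
    have hXYZ : (∑ k : Fin n, ((n : ℤ) - 1 - ((k : Fin n) : ℕ)) * (p k : ℤ))
        = (∑ i : Fin n, ((n : ℤ) - 1 - ((σ i : Fin n) : ℕ)) * (p i : ℤ))
          + ∑ i : Fin n, (p i : ℤ) * (((σ i : ℕ) : ℤ) - ((i : ℕ) : ℤ)) := by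
      rw [← Finset.sum_add_distrib]
      exact Finset.sum_congr rfl fun i _ => by ring
    rw [hXYZ]
    ring
  rw [key]
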